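/- For every element w of the Weyl group W(E₇), the inner product ⟨û₇, w(û₇)⟩ lies in the set {1, 1/3, −1/3, −1}. (Equivalently: the distance between two vertices of type 7 of the Coxeter complex of type E₇ is one of 0, arccos(1/3), arccos(−1/3), π.) -/

import Mathlib

noncomputable section

open scoped RealInnerProductSpace

/-- Euclidean space `ℝ⁸`. -/
abbrev E8Space := EuclideanSpace ℝ (Fin 8)

/-- The fundamental root vectors of the root system of type `E₇` inside `ℝ⁸`:
`r₁ = ½(1,1,1,−1,−1,−1,−1,−1)`, `rᵢ = eᵢ − eᵢ₋₁` for `2 ≤ i ≤ 6`, and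
`r₇ = ½(1,1,1,1,1,−1,1,1)` (here indexed by `Fin 7`, with `j = 0` corresponding
to `r₁` and `j = 6` to `r₇`). -/
def E7root : Fin 7 → E8Space := fun j =>
  if j = 0 then WithLp.toLp 2 (fun i : Fin 8 => if (i : ℕ) < 3 then (1 : ℝ) / 2 else -(1 / 2))
  else if j = 6 then WithLp.toLp 2 (fun i : Fin 8 => if (i : ℕ) = 5 then -(1 : ℝ) / 2 else 1 / 2)
  else WithLp.toLp 2 (fun i : Fin 8 => if (i : ℕ) = (j : ℕ) then (1 : ℝ)
        else if (i : ℕ) + 1 = (j : ℕ) then -1 else 0)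

/-- The Weyl group `W(E₇)`: the subgroup of linear isometries of `ℝ⁸` generated by the
reflections `s_r(x) = x − 2(⟨x,r⟩/⟨r,r⟩)r` in the fundamental root vectors of type `E₇`.
These generators preserve the subspace `V = {x : x₇ = x₈}` realizing the Coxeter
complex of type `E₇`. -/
def WeylE7 : Subgroup (E8Space ≃ₗᵢ[ℝ] E8Space) :=
  Subgroup.closure
    { f | ∃ j : Fin 7, ∀ x : E8Space,
        f x = x - ((2 * ⟪x, E7root j⟫ / ⟪E7root j, E7root j⟫) • E7root j) }

/-- `û₇ = (1,1,1,1,1,1,0,0)/√6`, a unit vector representing a vertex of type 7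
of the Coxeter complex of type `E₇`. -/
def u7hatE7 : E8Space := WithLp.toLp 2 (fun i : Fin 8 => (if (i : ℕ) < 6 then 1 else 0) / Real.sqrt 6)


set_option maxRecDepth 100000

/-- Coordinatewise cast of an integer vector into `E8Space`. -/
def qv (a : Fin 8 → ℤ) : E8Space := WithLp.toLp 2 (fun i => (a i : ℝ))

def dotZ (a b : Fin 8 → ℤ) : ℤ := ∑ i, a i * b i

/-- Doubled roots `2 rⱼ`, with integer coordinates. -/
def RZ : Fin 7 → Fin 8 → ℤ := fun j =>
  if j = 0 then (fun i => if (i : ℕ) < 3 then 1 else -1)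
  else if j = 6 then (fun i => if (i : ℕ) = 5 then -1 else 1)
  else (fun i => if (i : ℕ) = (j : ℕ) then 2
        else if (i : ℕ) + 1 = (j : ℕ) then -2 else 0)

def OVZ : Fin 56 → Fin 8 → ℤ := ![  ![1, 1, 1, 1, 1, 1, 0, 0],
  ![0, 0, 0, 0, 0, 2, -1, -1],
  ![0, 0, 0, 0, 2, 0, -1, -1],
  ![0, 0, 0, 2, 0, 0, -1, -1],
  ![0, 0, 2, 0, 0, 0, -1, -1],
  ![-1, -1, 1, 1, 1, 1, 0, 0],
  ![0, 2, 0, 0, 0, 0, -1, -1],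
  ![-1, 1, -1, 1, 1, 1, 0, 0],
  ![2, 0, 0, 0, 0, 0, -1, -1],
  ![1, -1, -1, 1, 1, 1, 0, 0],
  ![-1, 1, 1, -1, 1, 1, 0, 0],
  ![1, -1, 1, -1, 1, 1, 0, 0],
  ![-1, 1, 1, 1, -1, 1, 0, 0],
  ![1, 1, -1, -1, 1, 1, 0, 0],
  ![1, -1, 1, 1, -1, 1, 0, 0],
  ![-1, 1, 1, 1, 1, -1, 0, 0],
  ![1, 1, -1, 1, -1, 1, 0, 0],
  ![1, -1, 1, 1, 1, -1, 0, 0],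
  ![-2, 0, 0, 0, 0, 0, -1, -1],
  ![1, 1, 1, -1, -1, 1, 0, 0],
  ![1, 1, -1, 1, 1, -1, 0, 0],
  ![0, -2, 0, 0, 0, 0, -1, -1],
  ![0, 0, 0, 0, 0, 2, 1, 1],
  ![1, 1, 1, -1, 1, -1, 0, 0],
  ![0, 0, -2, 0, 0, 0, -1, -1],
  ![0, 0, 0, 0, 2, 0, 1, 1],
  ![1, 1, 1, 1, -1, -1, 0, 0],
  ![0, 0, 0, -2, 0, 0, -1, -1],
  ![0, 0, 0, 2, 0, 0, 1, 1],
  ![-1, -1, -1, -1, 1, 1, 0, 0],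
  ![0, 0, 0, 0, -2, 0, -1, -1],
  ![0, 0, 2, 0, 0, 0, 1, 1],
  ![-1, -1, -1, 1, -1, 1, 0, 0],
  ![0, 0, 0, 0, 0, -2, -1, -1],
  ![0, 2, 0, 0, 0, 0, 1, 1],
  ![-1, -1, 1, -1, -1, 1, 0, 0],
  ![-1, -1, -1, 1, 1, -1, 0, 0],
  ![2, 0, 0, 0, 0, 0, 1, 1],
  ![-1, 1, -1, -1, -1, 1, 0, 0],
  ![-1, -1, 1, -1, 1, -1, 0, 0],
  ![1, -1, -1, -1, -1, 1, 0, 0],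
  ![-1, 1, -1, -1, 1, -1, 0, 0],
  ![-1, -1, 1, 1, -1, -1, 0, 0],
  ![1, -1, -1, -1, 1, -1, 0, 0],
  ![-1, 1, -1, 1, -1, -1, 0, 0],
  ![1, -1, -1, 1, -1, -1, 0, 0],
  ![-1, 1, 1, -1, -1, -1, 0, 0],
  ![1, -1, 1, -1, -1, -1, 0, 0],
  ![-2, 0, 0, 0, 0, 0, 1, 1],
  ![0, -2, 0, 0, 0, 0, 1, 1],
  ![1, 1, -1, -1, -1, -1, 0, 0],
  ![0, 0, -2, 0, 0, 0, 1, 1],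
  ![0, 0, 0, -2, 0, 0, 1, 1],
  ![0, 0, 0, 0, -2, 0, 1, 1],
  ![0, 0, 0, 0, 0, -2, 1, 1],
  ![-1, -1, -1, -1, -1, -1, 0, 0]]

def FT : Fin 56 → Fin 7 → Fin 56 := ![  ![0, 0, 0, 0, 0, 0, 1],
  ![1, 1, 1, 1, 1, 2, 0],
  ![2, 2, 2, 2, 3, 1, 2],
  ![3, 3, 3, 4, 2, 3, 3],
  ![5, 4, 6, 3, 4, 4, 4],
  ![4, 5, 7, 5, 5, 5, 5],
  ![7, 8, 4, 6, 6, 6, 6],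
  ![6, 9, 5, 10, 7, 7, 7],
  ![9, 6, 8, 8, 8, 8, 8],
  ![8, 7, 9, 11, 9, 9, 9],
  ![10, 11, 10, 7, 12, 10, 10],
  ![11, 10, 13, 9, 14, 11, 11],
  ![12, 14, 12, 12, 10, 15, 12],
  ![13, 13, 11, 13, 16, 13, 13],
  ![14, 12, 16, 14, 11, 17, 14],
  ![15, 17, 15, 15, 15, 12, 18],
  ![16, 16, 14, 19, 13, 20, 16],
  ![17, 15, 20, 17, 17, 14, 21],
  ![18, 21, 18, 18, 18, 18, 15],
  ![22, 19, 19, 16, 19, 23, 19],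
  ![20, 20, 17, 23, 20, 16, 24],
  ![21, 18, 24, 21, 21, 21, 17],
  ![19, 22, 22, 22, 22, 25, 22],
  ![25, 23, 23, 20, 26, 19, 27],
  ![24, 24, 21, 27, 24, 24, 20],
  ![23, 25, 25, 25, 28, 22, 29],
  ![28, 26, 26, 26, 23, 26, 30],
  ![29, 27, 27, 24, 30, 27, 23],
  ![26, 28, 28, 31, 25, 28, 32],
  ![27, 29, 29, 29, 32, 29, 25],
  ![32, 30, 30, 30, 27, 33, 26],
  ![31, 31, 34, 28, 31, 31, 35],
  ![30, 32, 32, 35, 29, 36, 28],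
  ![36, 33, 33, 33, 33, 30, 33],
  ![34, 37, 31, 34, 34, 34, 38],
  ![35, 35, 38, 32, 35, 39, 31],
  ![33, 36, 36, 39, 36, 32, 36],
  ![37, 34, 37, 37, 37, 37, 40],
  ![38, 40, 35, 38, 38, 41, 34],
  ![39, 39, 41, 36, 42, 35, 39],
  ![40, 38, 40, 40, 40, 43, 37],
  ![41, 43, 39, 41, 44, 38, 41],
  ![42, 42, 44, 42, 39, 42, 42],
  ![43, 41, 43, 43, 45, 40, 43],
  ![44, 45, 42, 46, 41, 44, 44],
  ![45, 44, 45, 47, 43, 45, 45],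
  ![48, 47, 46, 44, 46, 46, 46],
  ![49, 46, 50, 45, 47, 47, 47],
  ![46, 49, 48, 48, 48, 48, 48],
  ![47, 48, 51, 49, 49, 49, 49],
  ![51, 50, 47, 50, 50, 50, 50],
  ![50, 51, 49, 52, 51, 51, 51],
  ![52, 52, 52, 51, 53, 52, 52],
  ![53, 53, 53, 53, 52, 54, 53],
  ![54, 54, 54, 54, 54, 53, 55],
  ![55, 55, 55, 55, 55, 55, 54]]

lemma E7root_eq (j : Fin 7) : E7root j = (2 : ℝ)⁻¹ • qv (RZ j) := by
  fin_cases j <;> ext i <;>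
    simp [E7root, RZ, qv, PiLp.toLp_apply, PiLp.smul_apply, smul_eq_mul] <;>
    split_ifs <;> norm_num

lemma inner_qv (a b : Fin 8 → ℤ) : ⟪qv a, qv b⟫ = (dotZ a b : ℝ) := by
  simp only [qv, dotZ, PiLp.inner_apply, PiLp.toLp_apply, RCLike.inner_apply, conj_trivial]
  push_cast
  exact Finset.sum_congr rfl (fun i _ => mul_comm _ _)

lemma RZ_norm : ∀ j : Fin 7, dotZ (RZ j) (RZ j) = 8 := by decide

lemma OVZ_closure : ∀ (k : Fin 56) (j : Fin 7) (i : Fin 8),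
    4 * OVZ (FT k j) i + dotZ (OVZ k) (RZ j) * RZ j i = 4 * OVZ k i := by decide

lemma OVZ_inj : Function.Injective OVZ := by decide

lemma OVZ_dots : ∀ k : Fin 56, dotZ (OVZ 0) (OVZ k) = 6 ∨ dotZ (OVZ 0) (OVZ k) = 2 ∨
    dotZ (OVZ 0) (OVZ k) = -2 ∨ dotZ (OVZ 0) (OVZ k) = -6 := by decide

lemma qv_inj : Function.Injective qv := by
  intro a b h
  funext i
  have := congrFun (congrArg WithLp.ofLp h) i
  simp only [qv, WithLp.ofLp_toLp] at this
  exact_mod_cast this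

lemma f_qv (f : E8Space ≃ₗᵢ[ℝ] E8Space) (j : Fin 7)
    (hf : ∀ x : E8Space,
      f x = x - ((2 * ⟪x, E7root j⟫ / ⟪E7root j, E7root j⟫) • E7root j))
    (k : Fin 56) : f (qv (OVZ k)) = qv (OVZ (FT k j)) := by
  rw [hf (qv (OVZ k)), E7root_eq j]
  rw [real_inner_smul_right, real_inner_smul_left, real_inner_smul_right,
    inner_qv, inner_qv]
  rw [RZ_norm j]
  ext i
  have key := OVZ_closure k j i
  have keyR : (4 : ℝ) * (OVZ (FT k j) i : ℝ) + (dotZ (OVZ k) (RZ j) : ℝ) * (RZ j i : ℝ)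
      = 4 * (OVZ k i : ℝ) := by exact_mod_cast congrArg (fun z : ℤ => (z : ℝ)) key
  simp only [qv, PiLp.toLp_apply, PiLp.sub_apply, PiLp.smul_apply, smul_eq_mul]
  push_cast
  nlinarith [keyR]

lemma orbit_stable (w : E8Space ≃ₗᵢ[ℝ] E8Space) (hw : w ∈ WeylE7) :
    ∀ k : Fin 56, ∃ k' : Fin 56, w (qv (OVZ k)) = qv (OVZ k') := by
  refine Subgroup.closure_induction ?_ ?_ ?_ ?_ hw
  · rintro f ⟨j, hf⟩ k
    exact ⟨FT k j, f_qv f j hf k⟩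
  · intro k; exact ⟨k, rfl⟩
  · intro a b _ _ ha hb k
    obtain ⟨k', hk'⟩ := hb k
    obtain ⟨k'', hk''⟩ := ha k'
    refine ⟨k'', ?_⟩
    have : (a * b) (qv (OVZ k)) = a (b (qv (OVZ k))) := rfl
    rw [this, hk', hk'']
  · intro a _ ha k
    choose g hg using ha
    have hginj : Function.Injective g := by
      intro x y hxy
      apply OVZ_inj
      apply qv_inj
      apply a.injective
      rw [hg x, hg y, hxy]
    have hgsurj : Function.Surjective g := Finite.surjective_of_injective hginj
    obtain ⟨k', hk'⟩ := hgsurj k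
    refine ⟨k', ?_⟩
    have h1 : a (qv (OVZ k')) = qv (OVZ k) := by rw [hg k', hk']
    have : a⁻¹ (a (qv (OVZ k'))) = qv (OVZ k') := a.symm_apply_apply _
    rw [h1] at this
    exact this

lemma u7hat_eq : u7hatE7 = (Real.sqrt 6)⁻¹ • qv (OVZ 0) := by
  have h0 : OVZ 0 = fun i : Fin 8 => if (i : ℕ) < 6 then (1 : ℤ) else 0 := by
    funext i; fin_cases i <;> rfl
  ext i
  rw [PiLp.smul_apply]
  simp only [u7hatE7, qv, PiLp.toLp_apply, h0, smul_eq_mul]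
  split_ifs <;> norm_num [div_eq_inv_mul]

theorem inner_u7hatE7_orbit (w : E8Space ≃ₗᵢ[ℝ] E8Space) (hw : w ∈ WeylE7) :
    ⟪u7hatE7, w u7hatE7⟫ ∈ ({1, 1/3, -1/3, -1} : Set ℝ) := by
  obtain ⟨k', hk'⟩ := orbit_stable w hw 0
  have h6 : (Real.sqrt 6) ^ 2 = 6 := Real.sq_sqrt (by norm_num)
  have h6ne : Real.sqrt 6 ≠ 0 := by positivity
  rw [u7hat_eq, map_smul, hk', real_inner_smul_left, real_inner_smul_right, inner_qv]
  have key : ((Real.sqrt 6)⁻¹ * ((Real.sqrt 6)⁻¹ * (dotZ (OVZ 0) (OVZ k') : ℝ)))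
      = (dotZ (OVZ 0) (OVZ k') : ℝ) / 6 := by
    rw [← mul_assoc, ← mul_inv, Real.mul_self_sqrt (by norm_num : (0:ℝ) ≤ 6)]
    ring
  rw [key]
  rcases OVZ_dots k' with h | h | h | h <;> rw [h] <;> norm_num [Set.mem_insert_iff]
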